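/- If X ∈ ℝ^{n×M} satisfies Y = AX and the number of nonzero rows of X satisfies ‖X‖₀ < (spark(A) + rank(Y) − 1)/2, then X is the unique solution among all matrices Z with Y = AZ and ‖Z‖₀ ≤ ‖X‖₀. -/

import Mathlib

/-- Number of nonzero entries of a vector (the ℓ⁰ "norm"). -/
noncomputable def sparsity {n : ℕ} (x : Fin n → ℝ) : ℕ :=
  (Finset.univ.filter fun i => x i ≠ 0).card

/-- The spark of a matrix: the minimal number of nonzero entries of a
nonzero kernel vector. -/
noncomputable def spark {m n : ℕ} (A : Matrix (Fin m) (Fin n) ℝ) : ℕ :=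
  sInf {k | ∃ v : Fin n → ℝ, v ≠ 0 ∧ A.mulVec v = 0 ∧ sparsity v = k}

open Classical in
/-- Number of nonzero rows of a matrix (the joint-sparsity "norm" ‖X‖₀). -/
noncomputable def rowSparsity {n M : ℕ} (X : Matrix (Fin n) (Fin M) ℝ) : ℕ :=
  (Finset.univ.filter fun j => X j ≠ 0).card

/-- Any subspace of dimension `d ≥ 1` all of whose vectors are supported on `S`
contains a nonzero vector with sparsity at most `S.card - d + 1`. -/
lemma exists_sparse_vector {n : ℕ} (d : ℕ) :
    ∀ (K : Submodule ℝ (Fin n → ℝ)) (S : Finset (Fin n)),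
    (∀ v ∈ K, ∀ i, i ∉ S → v i = 0) → Module.finrank ℝ K = d → 1 ≤ d →
    ∃ v ∈ K, v ≠ 0 ∧ sparsity v + d ≤ S.card + 1 := by
  induction d with
  | zero => intro K S _ _ h; omega
  | succ d ih =>
    intro K S hsupp hrank _
    by_cases hd : d = 0
    · -- base case: dimension 1
      subst hd
      have hpos : 0 < Module.finrank ℝ K := by omega
      obtain ⟨⟨v, hvK⟩, hv0⟩ := Module.finrank_pos_iff_exists_ne_zero.mp hpos
      refine ⟨v, hvK, by simpa using hv0, ?_⟩
      have hsub : (Finset.univ.filter fun i => v i ≠ 0) ⊆ S := by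
        intro i hi
        simp only [Finset.mem_filter] at hi
        by_contra hiS
        exact hi.2 (hsupp v hvK i hiS)
      have := Finset.card_le_card hsub
      simpa [sparsity] using this
    · -- inductive step
      have : ∃ i ∈ S, ∃ w ∈ K, w i ≠ 0 := by
        by_contra hcon
        push_neg at hcon
        have : K = ⊥ := by
          rw [Submodule.eq_bot_iff]
          intro v hv
          funext i
          by_cases hiS : i ∈ S
          · exact hcon i hiS v hv
          · exact hsupp v hv i hiS
        rw [this] at hrank
        simp [finrank_bot] at hrank
      obtain ⟨i, hiS, w, hwK, hwi⟩ := this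
      -- evaluation functional on K
      let f : K →ₗ[ℝ] ℝ :=
        { toFun := fun v => (v : Fin n → ℝ) i
          map_add' := by intros; rfl
          map_smul' := by intros; rfl }
      have hfsurj : LinearMap.range f = ⊤ := by
        rw [LinearMap.range_eq_top]
        intro r
        refine ⟨(r / w i) • ⟨w, hwK⟩, ?_⟩
        show (r / w i) * w i = r
        field_simp
      have hrn := LinearMap.finrank_range_add_finrank_ker f
      rw [hfsurj, finrank_top, hrank] at hrn
      have hkerrank : Module.finrank ℝ (LinearMap.ker f) = d := by
        have h1 : Module.finrank ℝ ℝ = 1 := Module.finrank_self ℝ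
        omega
      -- push the kernel into ℝⁿ
      let K' : Submodule ℝ (Fin n → ℝ) := Submodule.map K.subtype (LinearMap.ker f)
      have hK'rank : Module.finrank ℝ K' = d := by
        rw [Submodule.finrank_map_subtype_eq]
        exact hkerrank
      have hK'le : K' ≤ K := by
        rintro v ⟨⟨u, huK⟩, _, rfl⟩
        exact huK
      have hK'supp : ∀ v ∈ K', ∀ j, j ∉ S.erase i → v j = 0 := by
        rintro v ⟨⟨u, huK⟩, hu0, rfl⟩ j hj
        rw [Finset.mem_erase] at hj
        push_neg at hj
        by_cases hji : j = i
        · subst hji; exact hu0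
        · exact hsupp u huK j (hj hji)
      obtain ⟨v, hvK', hv0, hvcard⟩ := ih K' (S.erase i) hK'supp hK'rank (by omega)
      refine ⟨v, hK'le hvK', hv0, ?_⟩
      have := Finset.card_erase_of_mem hiS
      have hScard : 1 ≤ S.card := Finset.card_pos.mpr ⟨i, hiS⟩
      omega

lemma spark_le {m n : ℕ} (A : Matrix (Fin m) (Fin n) ℝ) (v : Fin n → ℝ)
    (hv : v ≠ 0) (hker : A.mulVec v = 0) : spark A ≤ sparsity v :=
  Nat.sInf_le ⟨v, hv, hker, rfl⟩

theorem stmt_2 {m n M : ℕ} (A : Matrix (Fin m) (Fin n) ℝ)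
    (Y : Matrix (Fin m) (Fin M) ℝ) (X : Matrix (Fin n) (Fin M) ℝ)
    (hX : A * X = Y)
    (hs : (rowSparsity X : ℝ) < ((spark A : ℝ) + (Y.rank : ℝ) - 1) / 2) :
    ∀ Z : Matrix (Fin n) (Fin M) ℝ, A * Z = Y →
      rowSparsity Z ≤ rowSparsity X → Z = X := by
  intro Z hZ hZle
  by_contra hne
  classical
  set S1 : Finset (Fin n) := Finset.univ.filter (fun j => X j ≠ 0) with hS1
  set S2 : Finset (Fin n) := Finset.univ.filter (fun j => Z j ≠ 0) with hS2
  set T : Finset (Fin n) := S1 ∩ S2 with hT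
  set S : Finset (Fin n) := S1 ∪ S2 with hS
  have hXrow : ∀ i, i ∉ S1 → ∀ j, X i j = 0 := by
    intro i hi j
    simp only [hS1, Finset.mem_filter, Finset.mem_univ, true_and, not_not] at hi
    rw [hi]; rfl
  have hZrow : ∀ i, i ∉ S2 → ∀ j, Z i j = 0 := by
    intro i hi j
    simp only [hS2, Finset.mem_filter, Finset.mem_univ, true_and, not_not] at hi
    rw [hi]; rfl
  -- the subspace K
  set V : Submodule ℝ (Fin n → ℝ) :=
    LinearMap.range X.mulVecLin ⊔ LinearMap.range Z.mulVecLin with hV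
  set K : Submodule ℝ (Fin n → ℝ) := V ⊓ LinearMap.ker A.mulVecLin with hK
  have hKsupp : ∀ v ∈ K, ∀ i, i ∉ S → v i = 0 := by
    rintro v ⟨hvV, _⟩ i hiS
    rw [hS, Finset.mem_union] at hiS
    push_neg at hiS
    obtain ⟨x, hx, z, hz, rfl⟩ := Submodule.mem_sup.mp hvV
    obtain ⟨c, rfl⟩ := hx
    obtain ⟨c', rfl⟩ := hz
    show X.mulVec c i + Z.mulVec c' i = 0
    simp only [Matrix.mulVec, dotProduct]
    rw [Finset.sum_eq_zero, Finset.sum_eq_zero, add_zero]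
    · intro j _; rw [hZrow i hiS.2 j, zero_mul]
    · intro j _; rw [hXrow i hiS.1 j, zero_mul]
  -- K is nontrivial
  have hDK : ∀ c : Fin M → ℝ, X.mulVec c - Z.mulVec c ∈ K := by
    intro c
    constructor
    · exact Submodule.sub_mem V (Submodule.mem_sup_left ⟨c, rfl⟩)
        (Submodule.mem_sup_right ⟨c, rfl⟩)
    · show A.mulVec (X.mulVec c - Z.mulVec c) = 0
      have h1 : A.mulVec (X.mulVec c) = Y.mulVec c := by
        rw [Matrix.mulVec_mulVec, hX]
      have h2 : A.mulVec (Z.mulVec c) = Y.mulVec c := by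
        rw [Matrix.mulVec_mulVec, hZ]
      rw [Matrix.mulVec_sub, h1, h2, sub_self]
  have hKne : ∃ v ∈ K, v ≠ 0 := by
    have : ∃ i j, X i j ≠ Z i j := by
      by_contra hcon
      push_neg at hcon
      exact hne (by ext i j; exact (hcon i j).symm)
    obtain ⟨i, j, hij⟩ := this
    refine ⟨X.mulVec (Pi.single j 1) - Z.mulVec (Pi.single j 1), hDK _, ?_⟩
    intro h0
    apply hij
    have := congrFun h0 i
    simp only [Pi.sub_apply, Pi.zero_apply, sub_eq_zero] at this
    simpa [Matrix.mulVec_single] using this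
  set d : ℕ := Module.finrank ℝ K with hd
  have hd1 : 1 ≤ d := by
    obtain ⟨v, hvK, hv0⟩ := hKne
    rw [hd, Nat.one_le_iff_ne_zero]
    intro h0
    have : K = ⊥ := Submodule.finrank_eq_zero.mp h0
    rw [this] at hvK
    exact hv0 (Submodule.mem_bot ℝ |>.mp hvK)
  -- sparse vector in K gives spark bound
  obtain ⟨v, hvK, hv0, hvcard⟩ := exists_sparse_vector d K S hKsupp rfl hd1
  have hspark : spark A + d ≤ S.card + 1 := by
    have := spark_le A v hv0 hvK.2
    omega
  -- rank bound: rank Y ≤ T.card + d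
  let f₁ : (Fin M → ℝ) →ₗ[ℝ] (↥T → ℝ) :=
    { toFun := fun c => fun i => X.mulVec c i.val
      map_add' := by intro a b; funext i; simp [Matrix.mulVec_add]
      map_smul' := by intro a b; funext i; simp [Matrix.mulVec_smul] }
  let g : (Fin M → ℝ) →ₗ[ℝ] (Fin n → ℝ) := X.mulVecLin - Z.mulVecLin
  let γ := f₁.prod g
  have hγker : LinearMap.ker γ ≤ LinearMap.ker Y.mulVecLin := by
    intro c hc
    rw [LinearMap.mem_ker, LinearMap.prod_apply] at hc
    have hf1 : ∀ i : ↥T, X.mulVec c i.val = 0 := fun i => congrFun (congrArg Prod.fst hc) i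
    have hg : X.mulVec c = Z.mulVec c := by
      have := congrArg Prod.snd hc
      simpa [g, sub_eq_zero] using this
    have hXc : X.mulVec c = 0 := by
      funext i
      by_cases hiT : i ∈ T
      · exact hf1 ⟨i, hiT⟩
      · rw [hT, Finset.mem_inter] at hiT
        push_neg at hiT
        by_cases hi1 : i ∈ S1
        · have hi2 := hiT hi1
          rw [hg]
          show (Finset.univ.sum fun j => Z i j * c j) = 0
          exact Finset.sum_eq_zero fun j _ => by rw [hZrow i hi2 j, zero_mul]
        · show (Finset.univ.sum fun j => X i j * c j) = 0
          exact Finset.sum_eq_zero fun j _ => by rw [hXrow i hi1 j, zero_mul]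
    show Y.mulVec c = 0
    rw [← hX, ← Matrix.mulVec_mulVec, hXc, Matrix.mulVec_zero]
  have hγrange : Module.finrank ℝ (LinearMap.range γ) ≤ T.card + d := by
    have hdecomp : γ = (LinearMap.inl ℝ (↥T → ℝ) (Fin n → ℝ) ∘ₗ f₁) +
        (LinearMap.inr ℝ (↥T → ℝ) (Fin n → ℝ) ∘ₗ g) := by
      ext c <;> simp [γ]
    have hle : LinearMap.range γ ≤
        LinearMap.range (LinearMap.inl ℝ (↥T → ℝ) (Fin n → ℝ) ∘ₗ f₁) ⊔
        LinearMap.range (LinearMap.inr ℝ (↥T → ℝ) (Fin n → ℝ) ∘ₗ g) := by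
      rintro x ⟨c, rfl⟩
      rw [hdecomp]
      exact Submodule.add_mem_sup ⟨c, rfl⟩ ⟨c, rfl⟩
    have h1 : Module.finrank ℝ
        (LinearMap.range (LinearMap.inl ℝ (↥T → ℝ) (Fin n → ℝ) ∘ₗ f₁)) ≤ T.card := by
      rw [LinearMap.range_comp]
      refine le_trans (Submodule.finrank_map_le _ _) ?_
      refine le_trans (Submodule.finrank_le _) ?_
      rw [Module.finrank_pi]
      simp
    have h2 : Module.finrank ℝ
        (LinearMap.range (LinearMap.inr ℝ (↥T → ℝ) (Fin n → ℝ) ∘ₗ g)) ≤ d := by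
      rw [LinearMap.range_comp]
      refine le_trans (Submodule.finrank_map_le _ _) ?_
      have hgK : LinearMap.range g ≤ K := by
        rintro x ⟨c, rfl⟩
        exact hDK c
      exact Submodule.finrank_mono hgK
    have hmono := Submodule.finrank_mono hle
    have hsupinf := Submodule.finrank_sup_add_finrank_inf_eq
      (LinearMap.range (LinearMap.inl ℝ (↥T → ℝ) (Fin n → ℝ) ∘ₗ f₁))
      (LinearMap.range (LinearMap.inr ℝ (↥T → ℝ) (Fin n → ℝ) ∘ₗ g))
    omega
  have hrankY : Y.rank ≤ T.card + d := by
    have h1 := LinearMap.finrank_range_add_finrank_ker γ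
    have h2 := LinearMap.finrank_range_add_finrank_ker Y.mulVecLin
    have h3 : Module.finrank ℝ (LinearMap.ker γ) ≤
        Module.finrank ℝ (LinearMap.ker Y.mulVecLin) := Submodule.finrank_mono hγker
    have h4 : Module.finrank ℝ (Fin M → ℝ) = M := by simp [Module.finrank_pi]
    rw [h4] at h1 h2
    have : Y.rank = Module.finrank ℝ (LinearMap.range Y.mulVecLin) := rfl
    omega
  -- conclusion
  have hcardST : S.card + T.card = S1.card + S2.card := by
    rw [hS, hT]
    exact Finset.card_union_add_card_inter S1 S2
  have hfinal : spark A + Y.rank ≤ 2 * rowSparsity X + 1 := by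
    have hX1 : rowSparsity X = S1.card := rfl
    have hZ1 : rowSparsity Z = S2.card := rfl
    rw [hX1] at hZle ⊢
    rw [hZ1] at hZle
    omega
  have hcast : (spark A : ℝ) + (Y.rank : ℝ) ≤ 2 * (rowSparsity X : ℝ) + 1 := by
    exact_mod_cast hfinal
  linarith
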